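/- For any w ∈ W̃, one has T(w₀^Σ w) = T(w) ⊔ T_Σ (a disjoint union) and D(w₀^Σ w) = D(w) ⊔ Σ (a disjoint union). -/

import Mathlib

/-!
Relative Coxeter groups: common definitions.

`(W, S)` is a Coxeter system (Mathlib's `CoxeterSystem M W`), `ℓ = cs.length`.
For `w : W`, `invSet cs w` is the set `T(w)` of left inversions of `w`, and
`descSet cs w = T(w) ∩ S` is `D(w)`.  For a subset `Sg ⊆ S` (playing the role of `Σ`),
`par Sg` is the standard parabolic subgroup `W_Σ`, `parRefl Sg` its set of
reflections `T_Σ`, `minRight cs Sg = W^Σ`, `minLeft cs Sg = ^ΣW`,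
`relN cs Sg Sg' = N(Σ, Σ')`, `IsLongest cs Sg w` says `w` is a longest element of `W_Σ`,
`longest cs Sg` is the longest element `w₀^Σ`, `relW cs Sg = W̃`,
`complSet cs Sg = Σ^∁`, `tilde cs Sg s = s̃ = w₀^{Σ∪{s}} w₀^Σ`, `relS cs Sg = S̃`,
`relLength cs Sg = ℓ̃ : W → ℕ∞`, and `GoodSubset cs Sg` records the standing
hypotheses (1) and (2) on `Σ`.
-/

namespace RelativeCoxeter

variable {B W : Type*} [Group W] {M : CoxeterMatrix B}

/-- The set `S` of simple reflections of the Coxeter system. -/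
def simpleSet (cs : CoxeterSystem M W) : Set W := Set.range cs.simple

/-- `T(w)`: the set of left inversions of `w`, i.e. reflections `t` with `ℓ(tw) < ℓ(w)`. -/
def invSet (cs : CoxeterSystem M W) (w : W) : Set W :=
  {t | cs.IsReflection t ∧ cs.length (t * w) < cs.length w}

/-- `D(w) = T(w) ∩ S`. -/
def descSet (cs : CoxeterSystem M W) (w : W) : Set W :=
  invSet cs w ∩ simpleSet cs

/-- The standard parabolic subgroup `W_Σ` generated by `Σ`. -/
def par (Sg : Set W) : Subgroup W := Subgroup.closure Sg

/-- `T_Σ`: the set of reflections of the Coxeter system `(W_Σ, Σ)`. -/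
def parRefl (Sg : Set W) : Set W :=
  {t | ∃ u ∈ par Sg, ∃ s ∈ Sg, t = u * s * u⁻¹}

/-- `W^Σ = {w : T(w⁻¹) ∩ T_Σ = ∅}`, minimal-length representatives of `W/W_Σ`. -/
def minRight (cs : CoxeterSystem M W) (Sg : Set W) : Set W :=
  {w | invSet cs w⁻¹ ∩ parRefl Sg = ∅}

/-- `^ΣW = {w : T(w) ∩ T_Σ = ∅}`, minimal-length representatives of `W_Σ\W`. -/
def minLeft (cs : CoxeterSystem M W) (Sg : Set W) : Set W :=
  {w | invSet cs w ∩ parRefl Sg = ∅}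

/-- `N(Σ, Σ') = {y ∈ W^Σ ∩ ^{Σ'}W : y W_Σ y⁻¹ = W_{Σ'}}`. -/
def relN (cs : CoxeterSystem M W) (Sg Sg' : Set W) : Set W :=
  {y | y ∈ minRight cs Sg ∧ y ∈ minLeft cs Sg' ∧
    (fun u => y * u * y⁻¹) '' (par Sg : Set W) = (par Sg' : Set W)}

/-- `w` is a longest element of `W_Σ`. -/
def IsLongest (cs : CoxeterSystem M W) (Sg : Set W) (w : W) : Prop :=
  w ∈ par Sg ∧ ∀ u ∈ par Sg, cs.length u ≤ cs.length w

/-- The longest element `w₀^Σ` of `W_Σ` (defined when it exists; junk value `1` otherwise). -/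
noncomputable def longest (cs : CoxeterSystem M W) (Sg : Set W) : W :=
  letI := Classical.propDecidable (∃ w, IsLongest cs Sg w)
  if h : ∃ w, IsLongest cs Sg w then h.choose else 1

/-- `W̃ = {w : w W_Σ w⁻¹ = W_Σ and T(w) ∩ T_Σ = ∅}`. -/
def relW (cs : CoxeterSystem M W) (Sg : Set W) : Set W :=
  {w | (fun u => w * u * w⁻¹) '' (par Sg : Set W) = (par Sg : Set W) ∧
    invSet cs w ∩ parRefl Sg = ∅}

/-- `Σ^∁ = {s ∈ S ∖ Σ : W_{Σ∪{s}} is finite}`. -/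
def complSet (cs : CoxeterSystem M W) (Sg : Set W) : Set W :=
  {s ∈ simpleSet cs \ Sg | ((par (Sg ∪ {s}) : Set W)).Finite}

/-- `s̃ = w₀^{Σ∪{s}} w₀^Σ`. -/
noncomputable def tilde (cs : CoxeterSystem M W) (Sg : Set W) (s : W) : W :=
  longest cs (Sg ∪ {s}) * longest cs Sg

/-- `S̃ = {s̃ : s ∈ Σ^∁}`. -/
noncomputable def relS (cs : CoxeterSystem M W) (Sg : Set W) : Set W :=
  {w | ∃ s ∈ complSet cs Sg, w = tilde cs Sg s}

/-- `ℓ̃(w) ∈ ℕ ∪ {∞}`: the minimal `q` such that `w = w₁ ⋯ w_q` with all `w_i ∈ S̃`. -/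
noncomputable def relLength (cs : CoxeterSystem M W) (Sg : Set W) (w : W) : ℕ∞ :=
  sInf {q : ℕ∞ | ∃ l : List W, (∀ x ∈ l, x ∈ relS cs Sg) ∧ l.prod = w ∧
    (l.length : ℕ∞) = q}

/-- The standing hypotheses on `Σ`: `Σ ⊆ S`, `W_Σ` is finite, and for every `Σ'` with
`Σ ⊆ Σ' ⊆ S` and `W_{Σ'}` finite, the longest element `w₀^{Σ'}` normalises `W_Σ`. -/
def GoodSubset (cs : CoxeterSystem M W) (Sg : Set W) : Prop :=
  Sg ⊆ simpleSet cs ∧ ((par Sg : Set W)).Finite ∧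
  ∀ Sg' : Set W, Sg ⊆ Sg' → Sg' ⊆ simpleSet cs → ((par Sg' : Set W)).Finite →
    ∀ w0 : W, IsLongest cs Sg' w0 →
      (fun u => w0 * u * w0⁻¹) '' (par Sg : Set W) = (par Sg : Set W)

variable (cs : CoxeterSystem M W)



/-- The cocycle group: pairs `(f, u)` with `f : W → ZMod 2`, `u : W`, multiplication
`(f,u)(g,v) = (f + u•g, uv)` where `(u•g)(t) = g(u⁻¹tu)`. -/
@[ext] structure Cocy (W : Type*) [Group W] where
  fn : W → ZMod 2
  el : W

namespace Cocy

variable {W : Type*} [Group W]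

/-- Conjugation action on functions. -/
def cAct (u : W) (f : W → ZMod 2) : W → ZMod 2 := fun t => f (u⁻¹ * t * u)

lemma cAct_cAct (u v : W) (f : W → ZMod 2) : cAct u (cAct v f) = cAct (u * v) f := by
  funext t; simp [cAct, mul_assoc]

@[simp] lemma cAct_one (f : W → ZMod 2) : cAct (1 : W) f = f := by funext t; simp [cAct]

@[simp] lemma cAct_zero (u : W) : cAct u (0 : W → ZMod 2) = 0 := rfl

lemma cAct_apply (u : W) (f : W → ZMod 2) (t : W) : cAct u f t = f (u⁻¹ * t * u) := rfl

lemma cAct_add (u : W) (f g : W → ZMod 2) : cAct u (f + g) = cAct u f + cAct u g := rfl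

lemma zmod2_cases (a : ZMod 2) : a = 0 ∨ a = 1 := by revert a; decide

lemma zmod2_add_self (a : ZMod 2) : a + a = 0 := by revert a; decide

omit [Group W] in
lemma fn2_add_self (f : W → ZMod 2) : f + f = 0 := by
  funext t; exact zmod2_add_self (f t)

/-- Multiplication. -/
def mul' (a b : Cocy W) : Cocy W := ⟨a.fn + cAct a.el b.fn, a.el * b.el⟩

/-- Inverse. -/
def inv' (a : Cocy W) : Cocy W := ⟨cAct a.el⁻¹ a.fn, a.el⁻¹⟩

instance : Group (Cocy W) where
  mul := mul'
  one := ⟨0, 1⟩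
  inv := inv'
  mul_assoc a b c := by
    show mul' (mul' a b) c = mul' a (mul' b c)
    simp [mul', cAct_cAct, cAct_add, add_assoc, mul_assoc]
  one_mul a := by show mul' ⟨0, 1⟩ a = a; simp [mul']
  mul_one a := by show mul' a ⟨0, 1⟩ = a; simp [mul']
  inv_mul_cancel a := by
    show mul' (inv' a) a = ⟨0, 1⟩
    simp [mul', inv', cAct_cAct, fn2_add_self]

@[simp] lemma mul_fn (a b : Cocy W) : (a * b).fn = a.fn + cAct a.el b.fn := rfl
@[simp] lemma mul_el (a b : Cocy W) : (a * b).el = a.el * b.el := rfl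
@[simp] lemma one_fn : (1 : Cocy W).fn = 0 := rfl
@[simp] lemma one_el : (1 : Cocy W).el = 1 := rfl
@[simp] lemma inv_fn (a : Cocy W) : (a⁻¹).fn = cAct a.el⁻¹ a.fn := rfl
@[simp] lemma inv_el (a : Cocy W) : (a⁻¹).el = a.el⁻¹ := rfl

/-- Indicator function. -/
noncomputable def delta (t : W) : W → ZMod 2 :=
  letI := Classical.decEq W
  fun x => if x = t then 1 else 0

lemma cAct_delta (u t : W) : cAct u (delta t) = delta (u * t * u⁻¹) := by
  classical
  funext y
  show delta t (u⁻¹ * y * u) = delta (u * t * u⁻¹) y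
  unfold delta
  rcases eq_or_ne y (u * t * u⁻¹) with rfl | h
  · rw [if_pos (by group), if_pos rfl]
  · rw [if_neg (fun hc => h (by rw [← hc]; group)), if_neg h]

@[simp] lemma delta_self (t : W) : delta t t = 1 := by
  classical
  unfold delta
  simp

lemma delta_ne {t x : W} (h : x ≠ t) : delta t x = 0 := by
  classical
  unfold delta
  simp [h]

lemma pow_mk (c : W → ZMod 2) (x : W) (m : ℕ) :
    (⟨c, x⟩ : Cocy W) ^ m = ⟨∑ j ∈ Finset.range m, cAct (x ^ j) c, x ^ m⟩ := by
  induction m with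
  | zero => ext t <;> simp
  | succ m ih =>
      rw [pow_succ, ih]
      show mul' _ _ = _
      rw [mul']
      ext t
      · show (_ + cAct (x ^ m) c) t = (∑ j ∈ Finset.range (m + 1), cAct (x ^ j) c) t
        rw [Finset.sum_range_succ]
      · show x ^ m * x = x ^ (m + 1)
        rw [pow_succ]

end Cocy



section Cocycle

open Cocy

variable {B W : Type*} [Group W] {M : CoxeterMatrix B} (cs : CoxeterSystem M W)

private lemma simple_pow_aux (i i' : B) :
    ∀ j : ℕ, cs.simple i * ((cs.simple i * cs.simple i') ^ j)⁻¹
      = (cs.simple i * cs.simple i') ^ j * cs.simple i := by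
  intro j
  induction j with
  | zero => simp
  | succ j ih =>
      have h1 : cs.simple i * (cs.simple i * cs.simple i')⁻¹
          = cs.simple i * cs.simple i' * cs.simple i := by
        rw [mul_inv_rev, CoxeterSystem.inv_simple, CoxeterSystem.inv_simple, ← mul_assoc]
      calc cs.simple i * ((cs.simple i * cs.simple i') ^ (j + 1))⁻¹
          = (cs.simple i * (cs.simple i * cs.simple i')⁻¹) * ((cs.simple i * cs.simple i') ^ j)⁻¹ := by
            rw [pow_succ, mul_inv_rev, mul_assoc]
        _ = (cs.simple i * cs.simple i') * (cs.simple i * ((cs.simple i * cs.simple i') ^ j)⁻¹) := by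
            rw [h1]; group
        _ = (cs.simple i * cs.simple i') ^ (j + 1) * cs.simple i := by
            rw [ih, pow_succ']; group

private lemma sum_pairs {A : Type*} [AddCommMonoid A] (g : ℕ → A) (m : ℕ) :
    ∑ j ∈ Finset.range m, (g (2 * j) + g (2 * j + 1)) = ∑ r ∈ Finset.range (2 * m), g r := by
  induction m with
  | zero => simp
  | succ m ih =>
      rw [Finset.sum_range_succ, ih, show 2 * (m + 1) = (2 * m + 1) + 1 by ring,
        Finset.sum_range_succ, Finset.sum_range_succ, add_assoc]

private lemma liftable_aux (i i' : B) :
    ((⟨delta (cs.simple i), cs.simple i⟩ : Cocy W)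
      * ⟨delta (cs.simple i'), cs.simple i'⟩) ^ M i i' = 1 := by
  set s : W := cs.simple i with hs
  set s' : W := cs.simple i' with hs'
  set x : W := s * s' with hx
  set m : ℕ := M i i' with hm
  have hxm : x ^ m = 1 := cs.simple_mul_simple_pow i i'
  have hprod : (⟨delta s, s⟩ : Cocy W) * ⟨delta s', s'⟩
      = ⟨delta s + cAct s (delta s'), x⟩ := by
    show Cocy.mul' _ _ = _
    rw [Cocy.mul']
  rw [hprod, pow_mk]
  have key : ∀ j : ℕ, cAct (x ^ j) (delta s + cAct s (delta s'))
      = delta (x ^ (2 * j) * s) + delta (x ^ (2 * j + 1) * s) := by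
    intro j
    rw [cAct_add, cAct_delta, cAct_delta, cAct_delta]
    congr 1
    · exact congrArg delta (by
        rw [mul_assoc, simple_pow_aux cs i i' j, ← mul_assoc, two_mul, pow_add])
    · refine congrArg delta ?_
      have h1 : s * (s' * s⁻¹) = x * s := by
        rw [hs, hs', CoxeterSystem.inv_simple, hx, hs, hs']
        group
      calc x ^ j * (s * s' * s⁻¹) * (x ^ j)⁻¹
          = x ^ j * x * (s * (x ^ j)⁻¹) := by rw [mul_assoc s s' s⁻¹, h1]; group
        _ = x ^ j * x * (x ^ j * s) := by rw [simple_pow_aux cs i i' j]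
        _ = x ^ (2 * j + 1) * s := by
            rw [show (2 : ℕ) * j + 1 = j + 1 + j by ring, pow_add, pow_add, pow_one]
            group
  have hsum : ∑ j ∈ Finset.range m, cAct (x ^ j) (delta s + cAct s (delta s')) = 0 := by
    simp_rw [key]
    rw [sum_pairs (fun r => delta (x ^ r * s)) m]
    rw [← Finset.sum_range_add_sum_Ico _ (by omega : m ≤ 2 * m)]
    rw [Finset.sum_Ico_eq_sum_range]
    have h2m : 2 * m - m = m := by omega
    rw [h2m]
    have hper : ∀ r : ℕ, delta (x ^ (m + r) * s) = delta (x ^ r * s) := by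
      intro r
      rw [pow_add, hxm, one_mul]
    simp_rw [hper]
    rw [← Finset.sum_add_distrib]
    have : ∀ r ∈ Finset.range m, delta (x ^ r * s) + delta (x ^ r * s) = (0 : W → ZMod 2) :=
      fun r _ => fn2_add_self _
    rw [Finset.sum_congr rfl this, Finset.sum_const, smul_zero]
  rw [hsum]
  ext t
  · show (0 : W → ZMod 2) t = (1 : Cocy W).fn t
    simp
  · show x ^ m = (1 : Cocy W).el
    simp [hxm]

/-- The cocycle homomorphism. -/
noncomputable def nmap : W →* Cocy W :=
  cs.lift ⟨fun i => ⟨delta (cs.simple i), cs.simple i⟩, fun i i' => liftable_aux cs i i'⟩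

@[simp] lemma nmap_simple (i : B) :
    nmap cs (cs.simple i) = ⟨delta (cs.simple i), cs.simple i⟩ :=
  cs.lift_apply_simple _ i

/-- Projection to the group component. -/
def elHom : Cocy W →* W where
  toFun := Cocy.el
  map_one' := rfl
  map_mul' _ _ := rfl

lemma nmap_el (w : W) : (nmap cs w).el = w := by
  have : (elHom.comp (nmap cs)) = MonoidHom.id W := by
    apply cs.ext_simple
    intro i
    simp [elHom]
    rfl
  calc (nmap cs w).el = (elHom.comp (nmap cs)) w := rfl
    _ = w := by rw [this]; rfl

/-- The reflection cocycle `n : W → (W → ZMod 2)`. -/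
noncomputable def nf (w : W) : W → ZMod 2 := (nmap cs w).fn

lemma nf_mul (u v : W) : nf cs (u * v) = nf cs u + cAct u (nf cs v) := by
  unfold nf
  rw [map_mul, mul_fn, nmap_el]

@[simp] lemma nf_one : nf cs (1 : W) = 0 := by unfold nf; rw [map_one]; rfl

@[simp] lemma nf_simple (i : B) : nf cs (cs.simple i) = delta (cs.simple i) := by
  unfold nf; rw [nmap_simple]

lemma nf_inv (u : W) : nf cs u⁻¹ = cAct u⁻¹ (nf cs u) := by
  unfold nf
  rw [map_inv, inv_fn, nmap_el]

lemma nf_inv_apply (u t : W) : nf cs u⁻¹ t = nf cs u (u * t * u⁻¹) := by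
  rw [nf_inv]
  show nf cs u ((u⁻¹)⁻¹ * t * u⁻¹) = _
  rw [inv_inv]

end Cocycle


section Exchange

open Cocy List

variable {B W : Type*} [Group W] {M : CoxeterMatrix B} (cs : CoxeterSystem M W)

lemma nf_wordProd (ω : List B) :
    nf cs (cs.wordProd ω) = ((cs.leftInvSeq ω).map delta).sum := by
  induction ω using List.reverseRecOn with
  | nil => simp
  | append_singleton ω i ih =>
      rw [← List.concat_eq_append, cs.wordProd_concat, nf_mul, ih,
        cs.leftInvSeq_concat, nf_simple, cAct_delta]
      rw [List.concat_eq_append, List.map_append, List.sum_append]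
      simp

lemma mem_of_sum_delta_ne (l : List W) (t : W) (h : (l.map delta).sum t ≠ 0) : t ∈ l := by
  induction l with
  | nil => simp at h
  | cons a l ih =>
      rcases eq_or_ne t a with rfl | hta
      · exact List.mem_cons_self
      · refine List.mem_cons_of_mem a (ih ?_)
        rw [List.map_cons, List.sum_cons] at h
        have : delta a t = 0 := delta_ne hta
        intro hc
        apply h
        show (delta a + (l.map delta).sum) t = 0
        rw [Pi.add_apply, this, hc, add_zero]

/-- Strong exchange, cocycle form. -/
lemma mem_leftInvSeq_of_nf (ω : List B) (t : W) (h : nf cs (cs.wordProd ω) t = 1) :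
    t ∈ cs.leftInvSeq ω := by
  apply mem_of_sum_delta_ne
  rw [← nf_wordProd cs ω, h]
  exact one_ne_zero

lemma nf_refl_self {t : W} (ht : cs.IsReflection t) : nf cs t t = 1 := by
  obtain ⟨u, i, rfl⟩ := ht
  have e0 : u * cs.simple i * u⁻¹ = u * (cs.simple i * u⁻¹) := mul_assoc _ _ _
  rw [e0, nf_mul, Pi.add_apply, cAct_apply, nf_mul, Pi.add_apply, cAct_apply, nf_simple]
  have e1 : u⁻¹ * (u * (cs.simple i * u⁻¹)) * u = cs.simple i := by group
  rw [e1, delta_self]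
  have e2 : (cs.simple i)⁻¹ * cs.simple i * cs.simple i = cs.simple i := by group
  rw [e2, nf_inv_apply, e0]
  rcases zmod2_cases (nf cs u (u * (cs.simple i * u⁻¹))) with h | h <;> rw [h] <;> decide

/-- The inversion characterization of the cocycle. -/
lemma length_lt_iff_nf {t w : W} (ht : cs.IsReflection t) :
    cs.length (t * w) < cs.length w ↔ nf cs w t = 1 := by
  constructor
  · intro hlt
    rcases zmod2_cases (nf cs w t) with h0 | h1
    · exfalso
      obtain ⟨ω, hred, hw⟩ := cs.exists_reduced_word' (t * w)
      have hn : nf cs (t * w) t = 1 := by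
        rw [nf_mul, Pi.add_apply, cAct_apply]
        have e1 : t⁻¹ * t * t = t := by group
        rw [e1, nf_refl_self cs ht, h0, add_zero]
      have hmem : t ∈ cs.leftInvSeq ω := mem_leftInvSeq_of_nf cs ω t (by rw [← hw]; exact hn)
      have := cs.isLeftInversion_of_mem_leftInvSeq hred hmem
      have hlt2 : cs.length (t * cs.wordProd ω) < cs.length (cs.wordProd ω) := this.2
      rw [← hw, ← mul_assoc, ht.mul_self, one_mul] at hlt2
      omega
    · exact h1
  · intro h1
    obtain ⟨ω, hred, hw⟩ := cs.exists_reduced_word' w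
    have hmem : t ∈ cs.leftInvSeq ω := mem_leftInvSeq_of_nf cs ω t (by rw [← hw]; exact h1)
    have := cs.isLeftInversion_of_mem_leftInvSeq hred hmem
    rw [hw]
    exact this.2

lemma mem_invSet_iff {t w : W} :
    t ∈ invSet cs w ↔ cs.IsReflection t ∧ nf cs w t = 1 := by
  unfold invSet
  constructor
  · rintro ⟨ht, hlt⟩
    exact ⟨ht, (length_lt_iff_nf cs ht).1 hlt⟩
  · rintro ⟨ht, h1⟩
    exact ⟨ht, (length_lt_iff_nf cs ht).2 h1⟩

end Exchange

section Parabolic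

open Cocy List

variable {B W : Type*} [Group W] {M : CoxeterMatrix B} (cs : CoxeterSystem M W)

lemma word_mem_par (Sg : Set W) (l : List B) (hl : ∀ i ∈ l, cs.simple i ∈ Sg) :
    cs.wordProd l ∈ par Sg := by
  induction l with
  | nil => rw [cs.wordProd_nil]; exact one_mem _
  | cons i l ih =>
      rw [cs.wordProd_cons]
      exact mul_mem (Subgroup.subset_closure (hl i (List.mem_cons_self)))
        (ih fun j hj => hl j (List.mem_cons_of_mem i hj))

lemma exists_word_par {Sg : Set W} (hS : Sg ⊆ simpleSet cs) {u : W} (hu : u ∈ par Sg) :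
    ∃ l : List B, (∀ i ∈ l, cs.simple i ∈ Sg) ∧ cs.wordProd l = u := by
  induction hu using Subgroup.closure_induction with
  | mem x hx =>
      obtain ⟨i, hi⟩ := hS hx
      exact ⟨[i], by simpa [hi] using hx, by simp [hi]⟩
  | one => exact ⟨[], by simp, cs.wordProd_nil⟩
  | mul x y hx hy ihx ihy =>
      obtain ⟨l₁, h₁, rfl⟩ := ihx
      obtain ⟨l₂, h₂, rfl⟩ := ihy
      refine ⟨l₁ ++ l₂, ?_, cs.wordProd_append l₁ l₂⟩
      intro i hi
      rcases List.mem_append.mp hi with h | h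
      · exact h₁ i h
      · exact h₂ i h
  | inv x hx ihx =>
      obtain ⟨l, h, rfl⟩ := ihx
      exact ⟨l.reverse, fun i hi => h i (List.mem_reverse.mp hi), cs.wordProd_reverse l⟩

lemma reduce_word : ∀ n (l : List B), l.length ≤ n →
    ∃ l' : List B, (∀ i ∈ l', i ∈ l) ∧ cs.IsReduced l' ∧ cs.wordProd l' = cs.wordProd l := by
  intro n
  induction n with
  | zero =>
      intro l hl
      rw [Nat.le_zero, List.length_eq_zero_iff] at hl
      subst hl
      exact ⟨[], by simp, by simp [CoxeterSystem.IsReduced], rfl⟩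
  | succ n ih =>
      intro l hl
      rcases l.eq_nil_or_concat with rfl | ⟨l₁, i, rfl⟩
      · exact ⟨[], by simp, by simp [CoxeterSystem.IsReduced], rfl⟩
      · have hl₁ : l₁.length ≤ n := by
          simp only [List.concat_eq_append, List.length_append, List.length_singleton] at hl
          omega
        obtain ⟨l₂, hsub, hred, hprod⟩ := ih l₁ hl₁
        have hsub' : ∀ j ∈ l₂, j ∈ l₁.concat i := by
          intro j hj
          rw [List.concat_eq_append, List.mem_append]
          exact Or.inl (hsub j hj)
        rcases cs.length_mul_simple (cs.wordProd l₂) i with hup | hdown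
        · refine ⟨l₂.concat i, ?_, ?_, ?_⟩
          · intro j hj
            rw [List.concat_eq_append, List.mem_append] at hj ⊢
            rcases hj with h | h
            · exact Or.inl (hsub j h)
            · exact Or.inr h
          · show cs.length (cs.wordProd (l₂.concat i)) = (l₂.concat i).length
            have hred' : cs.length (cs.wordProd l₂) = l₂.length := hred
            rw [cs.wordProd_concat, hup, List.length_concat, hred']
          · rw [cs.wordProd_concat, cs.wordProd_concat, hprod]
        · -- the word can be shortened by two letters
          set t : W := cs.wordProd l₂ * cs.simple i * (cs.wordProd l₂)⁻¹ with hts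
          have htrefl : cs.IsReflection t := ⟨cs.wordProd l₂, i, rfl⟩
          have htw : t * cs.wordProd l₂ = cs.wordProd l₂ * cs.simple i := by
            rw [hts]; group
          have hlt : cs.length (t * cs.wordProd l₂) < cs.length (cs.wordProd l₂) := by
            rw [htw]; omega
          have hnf : nf cs (cs.wordProd l₂) t = 1 := (length_lt_iff_nf cs htrefl).1 hlt
          have hmem : t ∈ cs.leftInvSeq l₂ := mem_leftInvSeq_of_nf cs l₂ t hnf
          obtain ⟨j, hj, hgetj⟩ := List.mem_iff_getElem.mp hmem
          have hjlen : j < l₂.length := by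
            rwa [cs.length_leftInvSeq] at hj
          have herase : cs.wordProd (l₂.eraseIdx j) = cs.wordProd l₂ * cs.simple i := by
            rw [← cs.getD_leftInvSeq_mul_wordProd l₂ j, ← htw]
            congr 1
            rw [List.getD_eq_getElem _ _ hj, hgetj]
          have hel : (l₂.eraseIdx j).length ≤ n := by
            have hred' : cs.length (cs.wordProd l₂) = l₂.length := hred
            have h2 : l₂.length ≤ l₁.length := by
              rw [← hred', hprod]
              exact cs.length_wordProd_le l₁
            have h3 : (l₂.eraseIdx j).length ≤ l₂.length := List.length_eraseIdx_le _ _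
            omega
          obtain ⟨l₃, hsub3, hred3, hprod3⟩ := ih (l₂.eraseIdx j) hel
          refine ⟨l₃, ?_, hred3, ?_⟩
          · intro k hk
            have hk2 : k ∈ l₂ := List.eraseIdx_subset (hsub3 k hk)
            exact hsub' k hk2
          · rw [hprod3, herase, cs.wordProd_concat, hprod]

end Parabolic

section Parabolic2

open Cocy List

variable {B W : Type*} [Group W] {M : CoxeterMatrix B} (cs : CoxeterSystem M W)

lemma exists_reduced_word_par {Sg : Set W} (hS : Sg ⊆ simpleSet cs) {u : W} (hu : u ∈ par Sg) :
    ∃ l : List B, (∀ i ∈ l, cs.simple i ∈ Sg) ∧ cs.IsReduced l ∧ cs.wordProd l = u := by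
  obtain ⟨l, hl, rfl⟩ := exists_word_par cs hS hu
  obtain ⟨l', hsub, hred, hprod⟩ := reduce_word cs l.length l le_rfl
  exact ⟨l', fun i hi => hl i (hsub i hi), hred, hprod⟩

lemma invSet_subset_parRefl {Sg : Set W} (hS : Sg ⊆ simpleSet cs) {u : W} (hu : u ∈ par Sg) :
    invSet cs u ⊆ parRefl Sg := by
  obtain ⟨l, hl, hred, rfl⟩ := exists_reduced_word_par cs hS hu
  intro t ht
  obtain ⟨htr, hnf⟩ := (mem_invSet_iff cs).1 ht
  have hmem : t ∈ cs.leftInvSeq l := mem_leftInvSeq_of_nf cs l t hnf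
  obtain ⟨j, hj, hgetj⟩ := List.mem_iff_getElem.mp hmem
  have hjl : j < l.length := by rwa [cs.length_leftInvSeq] at hj
  have hget : t = cs.wordProd (l.take j) * cs.simple (l[j]) * (cs.wordProd (l.take j))⁻¹ := by
    rw [← hgetj, ← List.getD_eq_getElem _ 1 hj, cs.getD_leftInvSeq]
    congr 2
    rw [List.getElem?_eq_getElem hjl]
    rfl
  refine ⟨cs.wordProd (l.take j), ?_, cs.simple (l[j]), ?_, hget⟩
  · exact word_mem_par cs Sg _ (fun i hi => hl i (List.take_subset j l hi))
  · exact hl _ (List.getElem_mem hjl)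

lemma mem_parRefl_iff {Sg : Set W} (hS : Sg ⊆ simpleSet cs) {t : W} :
    t ∈ parRefl Sg ↔ cs.IsReflection t ∧ t ∈ par Sg := by
  constructor
  · rintro ⟨u, hu, s, hs, rfl⟩
    obtain ⟨i, hi⟩ := hS hs
    constructor
    · rw [← hi]; exact ⟨u, i, rfl⟩
    · exact mul_mem (mul_mem hu (Subgroup.subset_closure hs)) (inv_mem hu)
  · rintro ⟨htr, hmem⟩
    have hne : t ≠ 1 := by
      intro h1
      have := htr.odd_length
      rw [h1] at this
      simp [cs.length_one] at this
    have hlen : 0 < cs.length t := by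
      rcases Nat.eq_zero_or_pos (cs.length t) with h0 | h
      · exact absurd (cs.length_eq_zero_iff.mp h0) hne
      · exact h
    have hself : t ∈ invSet cs t := by
      refine ⟨htr, ?_⟩
      rw [htr.mul_self, cs.length_one]
      exact hlen
    exact invSet_subset_parRefl cs hS hmem hself

lemma invSet_longest_eq {Sg : Set W} (hS : Sg ⊆ simpleSet cs) {w0 : W}
    (hw0 : IsLongest cs Sg w0) : invSet cs w0 = parRefl Sg := by
  apply Set.Subset.antisymm
  · exact invSet_subset_parRefl cs hS hw0.1
  · intro t ht
    obtain ⟨htr, hmem⟩ := (mem_parRefl_iff cs hS).1 ht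
    refine ⟨htr, lt_of_le_of_ne ?_ (htr.length_mul_right_ne w0)⟩
    exact hw0.2 (t * w0) (mul_mem hmem hw0.1)

lemma length_par_mul {Sg : Set W} (hS : Sg ⊆ simpleSet cs) {w : W}
    (hd : invSet cs w ∩ parRefl Sg = ∅) {v : W} (hv : v ∈ par Sg) :
    cs.length (v * w) = cs.length v + cs.length w := by
  obtain ⟨l, hl, hred, rfl⟩ := exists_reduced_word_par cs hS hv
  have hred' : cs.length (cs.wordProd l) = l.length := hred
  rw [hred']
  clear hred' hv
  induction l with
  | nil => simp
  | cons i l ih =>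
      have hredl : cs.IsReduced l := CoxeterSystem.IsReduced.drop hred 1
      have hll : ∀ j ∈ l, cs.simple j ∈ Sg := fun j hj => hl j (List.mem_cons_of_mem i hj)
      have ihl := ih hll hredl
      have hredl' : cs.length (cs.wordProd l) = l.length := hredl
      have hredil : cs.length (cs.wordProd (i :: l)) = l.length + 1 := by
        rw [hred]; simp
      have hsi : ¬ (cs.simple i ∈ invSet cs (cs.wordProd l * w)) := by
        intro hmem
        obtain ⟨hsr, hslt⟩ := (mem_invSet_iff cs).1 hmem
        rw [nf_mul, Pi.add_apply, cAct_apply] at hslt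
        have h1 : nf cs (cs.wordProd l) (cs.simple i) = 0 := by
          rcases zmod2_cases (nf cs (cs.wordProd l) (cs.simple i)) with h | h
          · exact h
          · exfalso
            have := (length_lt_iff_nf cs (cs.isReflection_simple i)).2 h
            rw [← cs.wordProd_cons, hredil, hredl'] at this
            omega
        rw [h1, zero_add] at hslt
        set q : W := (cs.wordProd l)⁻¹ * cs.simple i * cs.wordProd l with hq
        have hqr : cs.IsReflection q := by
          have := (cs.isReflection_simple i).conj (cs.wordProd l)⁻¹
          rwa [inv_inv] at this
        have hqinv : q ∈ invSet cs w := (mem_invSet_iff cs).2 ⟨hqr, hslt⟩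
        have hqpar : q ∈ parRefl Sg := by
          refine ⟨(cs.wordProd l)⁻¹, inv_mem (word_mem_par cs Sg l hll), cs.simple i,
            hl i (List.mem_cons_self), ?_⟩
          rw [hq, inv_inv]
        have : q ∈ invSet cs w ∩ parRefl Sg := ⟨hqinv, hqpar⟩
        rw [hd] at this
        exact this
      rw [cs.wordProd_cons, mul_assoc]
      rcases cs.length_simple_mul (cs.wordProd l * w) i with hup | hdown
      · rw [hup, ihl]
        simp only [List.length_cons]
        omega
      · exfalso
        exact hsi ⟨cs.isReflection_simple i, by omega⟩

end Parabolic2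

section Final

open Cocy List

variable {B W : Type*} [Group W] {M : CoxeterMatrix B} (cs : CoxeterSystem M W)

lemma nf_eq_of_invSet_eq {x y : W} (h : invSet cs x = invSet cs y) :
    ∀ t : W, cs.IsReflection t → nf cs x t = nf cs y t := by
  intro t ht
  rcases zmod2_cases (nf cs x t) with hx | hx <;> rcases zmod2_cases (nf cs y t) with hy | hy
  · rw [hx, hy]
  · exfalso
    have hty : t ∈ invSet cs y := (mem_invSet_iff cs).2 ⟨ht, hy⟩
    rw [← h] at hty
    have := ((mem_invSet_iff cs).1 hty).2
    rw [hx] at this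
    exact absurd this (by decide)
  · exfalso
    have htx : t ∈ invSet cs x := (mem_invSet_iff cs).2 ⟨ht, hx⟩
    rw [h] at htx
    have := ((mem_invSet_iff cs).1 htx).2
    rw [hy] at this
    exact absurd this (by decide)
  · rw [hx, hy]

lemma invSet_injective_aux : ∀ n (x y : W), cs.length x = n → invSet cs x = invSet cs y →
    x = y := by
  intro n
  induction n using Nat.strong_induction_on with
  | _ n ih =>
    intro x y hlen h
    rcases eq_or_ne x 1 with rfl | hx1
    · by_contra hy1
      obtain ⟨i, hi⟩ := cs.exists_leftDescent_of_ne_one (fun hc => hy1 hc.symm)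
      have hiy : cs.simple i ∈ invSet cs y := ⟨cs.isReflection_simple i, hi⟩
      rw [← h] at hiy
      have := hiy.2
      rw [mul_one, cs.length_one, cs.length_simple] at this
      omega
    · obtain ⟨i, hi⟩ := cs.exists_leftDescent_of_ne_one hx1
      have hix : cs.simple i ∈ invSet cs x := ⟨cs.isReflection_simple i, hi⟩
      have hiy : cs.simple i ∈ invSet cs y := h ▸ hix
      have hnfstep : ∀ t : W, cs.IsReflection t →
          nf cs (cs.simple i * x) t = nf cs (cs.simple i * y) t := by
        intro t ht
        rw [nf_mul, nf_mul, Pi.add_apply, Pi.add_apply, cAct_apply, cAct_apply]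
        congr 1
        apply nf_eq_of_invSet_eq cs h
        have := ht.conj (cs.simple i)⁻¹
        rwa [inv_inv] at this
      have hstep : invSet cs (cs.simple i * x) = invSet cs (cs.simple i * y) := by
        ext t
        rw [mem_invSet_iff, mem_invSet_iff]
        constructor
        · rintro ⟨ht, hnf⟩
          exact ⟨ht, by rw [← hnfstep t ht]; exact hnf⟩
        · rintro ⟨ht, hnf⟩
          exact ⟨ht, by rw [hnfstep t ht]; exact hnf⟩
      have hlt : cs.length (cs.simple i * x) < n := by
        rw [← hlen]; exact hi
      have := ih _ hlt (cs.simple i * x) (cs.simple i * y) rfl hstep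
      exact mul_left_cancel this

lemma invSet_injective {x y : W} (h : invSet cs x = invSet cs y) : x = y :=
  invSet_injective_aux cs (cs.length x) x y rfl h

lemma conj_mem_par {Sg : Set W} {w : W} (hw : w ∈ relW cs Sg) {u : W} (hu : u ∈ par Sg) :
    w * u * w⁻¹ ∈ par Sg := by
  have h := hw.1
  have : w * u * w⁻¹ ∈ ((par Sg : Set W)) := by
    rw [← h]
    exact ⟨u, hu, rfl⟩
  exact this

lemma conj_mem_par' {Sg : Set W} {w : W} (hw : w ∈ relW cs Sg) {u : W} (hu : u ∈ par Sg) :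
    w⁻¹ * u * w ∈ par Sg := by
  have h := hw.1
  have hu' : u ∈ (fun u => w * u * w⁻¹) '' (par Sg : Set W) := by
    rw [h]
    exact hu
  obtain ⟨p, hp, hpe⟩ := hu'
  have : w⁻¹ * u * w = p := by rw [← hpe]; group
  rw [this]
  exact hp

lemma conj_length_le {Sg : Set W} (hS : Sg ⊆ simpleSet cs) {w : W} (hw : w ∈ relW cs Sg)
    {u : W} (hu : u ∈ par Sg) : cs.length (w * u * w⁻¹) ≤ cs.length u := by
  have hv : w * u * w⁻¹ ∈ par Sg := conj_mem_par cs hw hu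
  have h1 : cs.length ((w * u * w⁻¹) * w) = cs.length (w * u * w⁻¹) + cs.length w :=
    length_par_mul cs hS hw.2 hv
  have h2 : (w * u * w⁻¹) * w = w * u := by group
  have h3 : cs.length (w * u) ≤ cs.length w + cs.length u := cs.length_mul_le w u
  rw [h2] at h1
  omega

lemma conj_length_eq {Sg : Set W} (hS : Sg ⊆ simpleSet cs) (hfin : ((par Sg : Set W)).Finite)
    {w : W} (hw : w ∈ relW cs Sg) {u : W} (hu : u ∈ par Sg) :
    cs.length (w * u * w⁻¹) = cs.length u := by
  classical
  set F := hfin.toFinset with hF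
  have hmemF : ∀ a : W, a ∈ F ↔ a ∈ par Sg := fun a => hfin.mem_toFinset
  have hsum : ∑ a ∈ F, cs.length (w * a * w⁻¹) = ∑ a ∈ F, cs.length a := by
    apply Finset.sum_nbij' (i := fun a => w * a * w⁻¹) (j := fun a => w⁻¹ * a * w)
    · intro a ha
      rw [hmemF] at ha ⊢
      exact conj_mem_par cs hw ha
    · intro a ha
      rw [hmemF] at ha ⊢
      exact conj_mem_par' cs hw ha
    · intro a _; group
    · intro a _; group
    · intro a _; rfl
  by_contra hne
  have hlt : cs.length (w * u * w⁻¹) < cs.length u :=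
    lt_of_le_of_ne (conj_length_le cs hS hw hu) hne
  have : ∑ a ∈ F, cs.length (w * a * w⁻¹) < ∑ a ∈ F, cs.length a := by
    apply Finset.sum_lt_sum
    · intro a ha
      exact conj_length_le cs hS hw ((hmemF a).1 ha)
    · exact ⟨u, (hmemF u).2 hu, hlt⟩
  omega

lemma longest_comm {Sg : Set W} (hS : Sg ⊆ simpleSet cs) (hfin : ((par Sg : Set W)).Finite)
    {w0 w : W} (hw0 : IsLongest cs Sg w0) (hw : w ∈ relW cs Sg) : w * w0 = w0 * w := by
  have hv : w * w0 * w⁻¹ ∈ par Sg := conj_mem_par cs hw hw0.1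
  have hveq : cs.length (w * w0 * w⁻¹) = cs.length w0 := conj_length_eq cs hS hfin hw hw0.1
  have hlong : IsLongest cs Sg (w * w0 * w⁻¹) :=
    ⟨hv, fun u hu => by rw [hveq]; exact hw0.2 u hu⟩
  have : invSet cs (w * w0 * w⁻¹) = invSet cs w0 := by
    rw [invSet_longest_eq cs hS hlong, invSet_longest_eq cs hS hw0]
  have heq : w * w0 * w⁻¹ = w0 := invSet_injective cs this
  calc w * w0 = (w * w0 * w⁻¹) * w := by group
    _ = w0 * w := by rw [heq]

lemma parRefl_conj_iff {Sg : Set W} (hS : Sg ⊆ simpleSet cs) {w : W} (hw : w ∈ relW cs Sg)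
    {t : W} (ht : cs.IsReflection t) :
    w⁻¹ * t * w ∈ parRefl Sg ↔ t ∈ parRefl Sg := by
  rw [mem_parRefl_iff cs hS, mem_parRefl_iff cs hS]
  constructor
  · rintro ⟨-, h2⟩
    refine ⟨ht, ?_⟩
    have := conj_mem_par cs hw h2
    have e : w * (w⁻¹ * t * w) * w⁻¹ = t := by group
    rwa [e] at this
  · rintro ⟨-, h2⟩
    refine ⟨?_, conj_mem_par' cs hw h2⟩
    have := ht.conj w⁻¹
    rwa [inv_inv] at this

lemma parRefl_inter_simple {Sg : Set W} (hS : Sg ⊆ simpleSet cs) :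
    parRefl Sg ∩ simpleSet cs = Sg := by
  apply Set.Subset.antisymm
  · rintro t ⟨hpr, i, hi⟩
    have hmem : t ∈ par Sg := ((mem_parRefl_iff cs hS).1 hpr).2
    obtain ⟨l, hl, hred, hprod⟩ := exists_reduced_word_par cs hS hmem
    have hlen1 : l.length = 1 := by
      have hred' : cs.length (cs.wordProd l) = l.length := hred
      rw [hprod, ← hi, cs.length_simple] at hred'
      omega
    obtain ⟨j, rfl⟩ := List.length_eq_one_iff.mp hlen1
    have : cs.wordProd [j] = t := hprod
    rw [cs.wordProd_singleton] at this
    rw [← this]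
    exact hl j (List.mem_singleton_self j)
  · intro s hs
    exact ⟨⟨1, one_mem _, s, hs, by group⟩, hS hs⟩

end Final


/-- for `w ∈ W̃`, `T(w₀^Σ w) = T(w) ⊔ T_Σ` and `D(w₀^Σ w) = D(w) ⊔ Σ`. -/
theorem invSet_longest_mul (Sg : Set W) (hSg : GoodSubset cs Sg)
    (w0 : W) (hw0 : IsLongest cs Sg w0) (w : W) (hw : w ∈ relW cs Sg) :
    invSet cs (w0 * w) = invSet cs w ∪ parRefl Sg ∧
    Disjoint (invSet cs w) (parRefl Sg) ∧
    descSet cs (w0 * w) = descSet cs w ∪ Sg ∧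
    Disjoint (descSet cs w) Sg := by
  obtain ⟨hS, hfin, -⟩ := hSg
  have hdisj := hw.2
  have hcomm : w * w0 = w0 * w := longest_comm cs hS hfin hw0 hw
  have hSgsub : Sg ⊆ parRefl Sg := fun s hs => ⟨1, one_mem _, s, hs, by group⟩
  have hmain : invSet cs (w0 * w) = invSet cs w ∪ parRefl Sg := by
    rw [← hcomm]
    ext t
    rw [mem_invSet_iff]
    constructor
    · rintro ⟨ht, hnf⟩
      rw [nf_mul, Pi.add_apply, Cocy.cAct_apply] at hnf
      rcases Cocy.zmod2_cases (nf cs w t) with ha | ha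
      · right
        rw [ha, zero_add] at hnf
        have htc : cs.IsReflection (w⁻¹ * t * w) := by
          have := ht.conj w⁻¹
          rwa [inv_inv] at this
        have : w⁻¹ * t * w ∈ invSet cs w0 := (mem_invSet_iff cs).2 ⟨htc, hnf⟩
        rw [invSet_longest_eq cs hS hw0] at this
        exact (parRefl_conj_iff cs hS hw ht).1 this
      · left
        exact (mem_invSet_iff cs).2 ⟨ht, ha⟩
    · intro hmem
      rcases hmem with hmem | hmem
      · obtain ⟨ht, ha⟩ := (mem_invSet_iff cs).1 hmem
        refine ⟨ht, ?_⟩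
        rw [nf_mul, Pi.add_apply, Cocy.cAct_apply, ha]
        rcases Cocy.zmod2_cases (nf cs w0 (w⁻¹ * t * w)) with hb | hb
        · rw [hb]; decide
        · exfalso
          have htc : cs.IsReflection (w⁻¹ * t * w) := by
            have := ht.conj w⁻¹
            rwa [inv_inv] at this
          have : w⁻¹ * t * w ∈ invSet cs w0 := (mem_invSet_iff cs).2 ⟨htc, hb⟩
          rw [invSet_longest_eq cs hS hw0] at this
          have htpr : t ∈ parRefl Sg := (parRefl_conj_iff cs hS hw ht).1 this
          have : t ∈ invSet cs w ∩ parRefl Sg := ⟨hmem, htpr⟩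
          rw [hdisj] at this
          exact this
      · have ht : cs.IsReflection t := ((mem_parRefl_iff cs hS).1 hmem).1
        refine ⟨ht, ?_⟩
        rw [nf_mul, Pi.add_apply, Cocy.cAct_apply]
        have hb : nf cs w0 (w⁻¹ * t * w) = 1 := by
          have htc : w⁻¹ * t * w ∈ parRefl Sg := (parRefl_conj_iff cs hS hw ht).2 hmem
          rw [← invSet_longest_eq cs hS hw0] at htc
          exact ((mem_invSet_iff cs).1 htc).2
        have ha : nf cs w t = 0 := by
          rcases Cocy.zmod2_cases (nf cs w t) with h | h
          · exact h
          · exfalso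
            have : t ∈ invSet cs w ∩ parRefl Sg := ⟨(mem_invSet_iff cs).2 ⟨ht, h⟩, hmem⟩
            rw [hdisj] at this
            exact this
        rw [ha, hb]
        decide
  refine ⟨hmain, Set.disjoint_iff_inter_eq_empty.mpr hdisj, ?_, ?_⟩
  · show invSet cs (w0 * w) ∩ simpleSet cs = descSet cs w ∪ Sg
    rw [hmain, Set.union_inter_distrib_right, parRefl_inter_simple cs hS]
    rfl
  · have hd : Disjoint (invSet cs w) (parRefl Sg) :=
      Set.disjoint_iff_inter_eq_empty.mpr hdisj
    exact Disjoint.mono Set.inter_subset_left hSgsub hd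


end RelativeCoxeter
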